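/- Let κ be a regular uncountable cardinal. Suppose every C-sequence on κ is trivial stationarily often: for every sequence ⟨C_α : α ∈ lim(κ)⟩ of clubs C_α ⊆ α, there is a club D ⊆ κ such that for every α < κ there are stationarily many β < κ with D ∩ α ⊆ C_β. Then κ →^poly (κ)^2_{reg-bdd} holds: every normal regressively bounded coloring f : [κ]^2 → κ admits a rainbow subset of cardinality κ. -/

import Mathlib

open Ordinal Set Cardinal

/-- `C` is a club (closed unbounded) subset of the ordinal `o`. -/
def IsClubIn (C : Set Ordinal) (o : Ordinal) : Prop :=
  C ⊆ Set.Iio o ∧ (∀ α < o, ∃ β ∈ C, α < β) ∧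
    (∀ α < o, Order.IsSuccLimit α → (∀ β < α, ∃ γ ∈ C, β < γ ∧ γ < α) → α ∈ C)

/-- `S` is stationary in the ordinal `o`. -/
def IsStatIn (S : Set Ordinal) (o : Ordinal) : Prop :=
  ∀ C : Set Ordinal, IsClubIn C o → (S ∩ C).Nonempty

/-- `f` is a normal coloring of pairs below `o`: equal colors have equal maxima. -/
def IsNormal2 (f : Ordinal → Ordinal → Ordinal) (o : Ordinal) : Prop :=
  ∀ a b a' b', a < b → b < o → a' < b' → b' < o → f a b = f a' b' → b = b'

/-- `f` is regressively bounded on pairs below `κ.ord`. -/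
def RegBdd (f : Ordinal → Ordinal → Ordinal) (κ : Cardinal) : Prop :=
  ∃ lam : Cardinal, lam < κ ∧
    IsStatIn {α : Ordinal | lam ≤ α.cof} κ.ord ∧
    ∀ α < κ.ord, lam ≤ Ordinal.cof α →
      ∀ i : Ordinal, ∃ b < α, ∀ β < α, f β α = i → β < b

/-- `f` is injective on pairs from `A` ("A is rainbow for f"). -/
def RainbowOn (f : Ordinal → Ordinal → Ordinal) (A : Set Ordinal) : Prop :=
  ∀ a ∈ A, ∀ b ∈ A, ∀ a' ∈ A, ∀ b' ∈ A,
    a < b → a' < b' → f a b = f a' b' → a = a' ∧ b = b'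


section helpers

/-- A bounded sup below an ordinal of big cofinality stays below. -/
lemma bsup_lt_of_cof {β ν : Ordinal} (hβ : Order.IsSuccLimit β) (hν : ν.card < β.cof)
    (f : ∀ x < ν, Ordinal) (hf : ∀ x hx, f x hx < β) : Ordinal.bsup ν f < β := by
  have hb : Ordinal.blsub ν f ≤ β := Ordinal.blsub_le_iff.2 hf
  rcases lt_or_eq_of_le hb with h | h
  · exact lt_of_le_of_lt (Ordinal.bsup_le_blsub f) h
  · exfalso
    have := Ordinal.cof_blsub_le f
    rw [h] at this
    exact absurd (this.trans_lt hν) (lt_irrefl _)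

/-- A bounded lsub below an ordinal of big cofinality stays below. -/
lemma blsub_lt_of_cof {β ν : Ordinal} (hβ : Order.IsSuccLimit β) (hν : ν.card < β.cof)
    (f : ∀ x < ν, Ordinal) (hf : ∀ x hx, f x hx < β) : Ordinal.blsub ν f < β := by
  have hb : Ordinal.blsub ν f ≤ β := Ordinal.blsub_le_iff.2 hf
  rcases lt_or_eq_of_le hb with h | h
  · exact h
  · exfalso
    have := Ordinal.cof_blsub_le f
    rw [h] at this
    exact absurd (this.trans_lt hν) (lt_irrefl _)

/-- lsub over ℕ below an ordinal of uncountable cofinality stays below. -/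
lemma lsub_nat_lt_of_cof {β : Ordinal.{0}} (hβ : Order.IsSuccLimit β) (hcof : ℵ₀ < β.cof)
    (f : ℕ → Ordinal) (hf : ∀ n, f n < β) : Ordinal.lsub f < β := by
  have hb : Ordinal.lsub f ≤ β := Ordinal.lsub_le_iff.2 hf
  rcases lt_or_eq_of_le hb with h | h
  · exact h
  · exfalso
    have := Ordinal.cof_lsub_le f
    rw [h, Cardinal.mk_nat] at this
    exact absurd (this.trans_lt hcof) (lt_irrefl _)

/-- The tail `{γ | α < γ} ∩ Iio o` is a club in a limit ordinal `o`. -/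
lemma isClubIn_Ioi {o : Ordinal.{0}} (ho : Order.IsSuccLimit o) (α : Ordinal) (hα : α < o) :
    IsClubIn (Set.Ioi α ∩ Set.Iio o) o := by
  refine ⟨fun x hx => hx.2, ?_, ?_⟩
  · intro x hx
    refine ⟨Order.succ (max α x), ⟨?_, ?_⟩, ?_⟩
    · exact lt_of_le_of_lt (le_max_left _ _) (Order.lt_succ (max α x))
    · exact ho.succ_lt (max_lt hα hx)
    · exact lt_of_le_of_lt (le_max_right _ _) (Order.lt_succ (max α x))
  · intro x hx hxl happ
    rcases happ 0 hxl.pos with ⟨γ, ⟨hγ1, _⟩, _, hγx⟩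
    exact ⟨hγ1.trans hγx, hx⟩

/-- The intersection of two clubs in an ordinal of uncountable cofinality is a club. -/
lemma isClubIn_inter {o : Ordinal.{0}} (ho : Order.IsSuccLimit o) (hcof : ℵ₀ < o.cof)
    {C₁ C₂ : Set Ordinal} (h₁ : IsClubIn C₁ o) (h₂ : IsClubIn C₂ o) :
    IsClubIn (C₁ ∩ C₂) o := by
  obtain ⟨hs₁, hu₁, hc₁⟩ := h₁
  obtain ⟨hs₂, hu₂, hc₂⟩ := h₂
  refine ⟨fun x hx => hs₁ hx.1, ?_, ?_⟩
  · -- unboundedness via an interleaved ω-chain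
    intro x hx
    classical
    -- choice functions
    choose g₁ hg₁ hg₁' using hu₁
    choose g₂ hg₂ hg₂' using hu₂
    -- Y : ℕ → Ordinal
    let Y : ℕ → Ordinal := fun n => Nat.rec (motive := fun _ => Ordinal) (g₁ x hx) (fun (n : ℕ) (y : Ordinal) =>
      if h : y < o then (if n % 2 = 0 then g₂ y h else g₁ y h) else 0) n
    have hY0 : Y 0 = g₁ x hx := rfl
    have hYlt : ∀ n, Y n < o := by
      intro n
      induction n with
      | zero => exact hs₁ (hg₁ x hx)
      | succ n ih =>
        show (if h : Y n < o then (if n % 2 = 0 then g₂ (Y n) h else g₁ (Y n) h) else 0) < o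
        rw [dif_pos ih]
        split
        · exact hs₂ (hg₂ _ ih)
        · exact hs₁ (hg₁ _ ih)
    have hYsucc : ∀ n, Y n < Y (n + 1) := by
      intro n
      show Y n < (if h : Y n < o then (if n % 2 = 0 then g₂ (Y n) h else g₁ (Y n) h) else 0)
      rw [dif_pos (hYlt n)]
      split
      · exact hg₂' _ (hYlt n)
      · exact hg₁' _ (hYlt n)
    have hYmono : ∀ m n, m < n → Y m < Y n := by
      intro m n hmn
      induction n with
      | zero => omega
      | succ n ih =>
        rcases Nat.lt_succ_iff_lt_or_eq.1 hmn with h | h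
        · exact (ih h).trans (hYsucc n)
        · rw [h]; exact hYsucc n
    -- the limit
    set α := Ordinal.lsub Y with hα
    have hαo : α < o := lsub_nat_lt_of_cof ho hcof Y hYlt
    have hxα : x < α := lt_of_lt_of_le (hg₁' x hx) (Ordinal.lt_lsub Y 0).le
    have hαlim : Order.IsSuccLimit α := by
      refine Ordinal.isSuccLimit_iff.2 ⟨?_, Order.isSuccPrelimit_iff_succ_lt.2 ?_⟩
      · intro h0
        have := Ordinal.lt_lsub Y 0
        rw [← hα, h0] at this
        exact absurd this (fun h => not_lt_zero h)
      · intro z hz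
        rcases Ordinal.lt_lsub_iff.1 hz with ⟨n, hn⟩
        have : z + 1 ≤ Y (n+1) := by
          have := hYsucc n
          have h2 : z < Y (n+1) := lt_of_le_of_lt hn this
          exact Order.add_one_le_iff.2 h2
        exact lt_of_le_of_lt this (Ordinal.lt_lsub Y (n+1))
    -- membership in each club: approach condition
    have happ : ∀ (p : ℕ → Prop) (g : ∀ y < o, Ordinal)
        (hg : ∀ y hy, y < g y hy) (hgY : ∀ n, p n → Y (n+1) = g (Y n) (hYlt n))
        (hp : ∀ n, p n ∨ p (n+1)), (∀ z < α, ∃ γ, (∃ n, p n ∧ γ = Y (n+1)) ∧ z < γ ∧ γ < α) := by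
      intro p g hg hgY hp z hz
      rcases Ordinal.lt_lsub_iff.1 hz with ⟨n, hn⟩
      rcases hp n with h | h
      · exact ⟨Y (n+1), ⟨n, h, rfl⟩, lt_of_le_of_lt hn (hYsucc n), Ordinal.lt_lsub Y (n+1)⟩
      · refine ⟨Y (n+2), ⟨n+1, h, rfl⟩, ?_, Ordinal.lt_lsub Y (n+2)⟩
        exact lt_of_le_of_lt hn ((hYsucc n).trans (hYsucc (n+1)))
    have hmem₂ : α ∈ C₂ := by
      refine hc₂ α hαo hαlim ?_
      intro z hz
      rcases happ (fun n => n % 2 = 0) g₂ hg₂' (fun n hn => by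
          show (if h : Y n < o then (if n % 2 = 0 then g₂ (Y n) h else g₁ (Y n) h) else 0) = _
          rw [dif_pos (hYlt n), if_pos hn]) (fun n => by omega) z hz with ⟨γ, ⟨n, hn, hγ⟩, h1, h2⟩
      refine ⟨γ, ?_, h1, h2⟩
      rw [hγ]
      show (if h : Y n < o then (if n % 2 = 0 then g₂ (Y n) h else g₁ (Y n) h) else 0) ∈ C₂
      rw [dif_pos (hYlt n), if_pos hn]
      exact hg₂ _ _
    have hmem₁ : α ∈ C₁ := by
      refine hc₁ α hαo hαlim ?_
      intro z hz
      rcases happ (fun n => ¬ n % 2 = 0) g₁ hg₁' (fun n hn => by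
          show (if h : Y n < o then (if n % 2 = 0 then g₂ (Y n) h else g₁ (Y n) h) else 0) = _
          rw [dif_pos (hYlt n), if_neg hn]) (fun n => by omega) z hz with ⟨γ, ⟨n, hn, hγ⟩, h1, h2⟩
      refine ⟨γ, ?_, h1, h2⟩
      rw [hγ]
      show (if h : Y n < o then (if n % 2 = 0 then g₂ (Y n) h else g₁ (Y n) h) else 0) ∈ C₁
      rw [dif_pos (hYlt n), if_neg hn]
      exact hg₁ _ _
    exact ⟨α, ⟨hmem₁, hmem₂⟩, hxα⟩
  · intro x hx hxl happ
    refine ⟨hc₁ x hx hxl (fun z hz => ?_), hc₂ x hx hxl (fun z hz => ?_)⟩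
    · rcases happ z hz with ⟨γ, hγ, h1, h2⟩
      exact ⟨γ, hγ.1, h1, h2⟩
    · rcases happ z hz with ⟨γ, hγ, h1, h2⟩
      exact ⟨γ, hγ.2, h1, h2⟩

end helpers

section club
open Ordinal Set Cardinal

/-- The basic transfinite sequence used to build clubs with jump conditions. -/
noncomputable def seqc (g j : Ordinal → Ordinal) : Ordinal → Ordinal := fun ν =>
  Ordinal.limitRecOn ν (g 0) (fun w cw => max (g (w+1)) (max (cw+1) (j cw + 1)))
    (fun w _ ih => Ordinal.bsup w ih)

lemma seqc_zero (g j : Ordinal → Ordinal) : seqc g j 0 = g 0 :=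
  Ordinal.limitRecOn_zero _ _ _

lemma seqc_succ (g j : Ordinal → Ordinal) (w : Ordinal) :
    seqc g j (w + 1) = max (g (w+1)) (max (seqc g j w + 1) (j (seqc g j w) + 1)) := by
  have : (w + 1 : Ordinal) = Order.succ w := rfl
  rw [seqc, this, Ordinal.limitRecOn_succ]
  rfl

lemma seqc_limit (g j : Ordinal → Ordinal) {w : Ordinal} (hw : Order.IsSuccLimit w) :
    seqc g j w = Ordinal.bsup w (fun x _ => seqc g j x) :=
  Ordinal.limitRecOn_limit _ _ _ _ hw

/-- Given a limit ordinal `β` and a "jump" function `j` on `β`, there is a club in `β`,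
of cardinality at most `cof β`, such that for any two of its elements `a < a'`
we have `j a < a'`. -/
lemma exists_club_jump (β : Ordinal.{0}) (hβ : Order.IsSuccLimit β) (j : Ordinal → Ordinal)
    (hj : ∀ x < β, j x < β) :
    ∃ Cb : Set Ordinal, IsClubIn Cb β ∧ #Cb ≤ Cardinal.lift.{1} β.cof ∧
      ∀ a ∈ Cb, ∀ a' ∈ Cb, a < a' → j a < a' := by
  classical
  obtain ⟨f, hf⟩ := Ordinal.exists_fundamental_sequence β
  have hμlim : Order.IsSuccLimit β.cof.ord := Cardinal.isSuccLimit_ord (Ordinal.aleph0_le_cof.2 hβ)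
  set g : Ordinal → Ordinal := fun ν => if h : ν < (β.cof.ord) then f ν h else 0 with hg
  have hgβ : ∀ ν < (β.cof.ord), g ν < β := by
    intro ν hν
    simp only [hg, dif_pos hν]
    exact hf.lt hν
  set c : Ordinal → Ordinal := seqc g j with hc
  -- key induction: boundedness and strict monotonicity
  have key : ∀ ν, ν < (β.cof.ord) → c ν < β ∧ ∀ x < ν, c x < c ν := by
    intro ν
    induction ν using Ordinal.induction with
    | _ ν IH =>
      intro hν
      rcases Ordinal.zero_or_succ_or_isSuccLimit ν with h0 | ⟨w, hw⟩ | hlim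
      · subst h0
        refine ⟨?_, fun x hx => absurd hx (fun h => not_lt_zero h)⟩
        rw [hc, seqc_zero]
        exact hgβ 0 hμlim.pos
      · have hw' : ν = w + 1 := by rw [← hw]; rfl
        subst hw'
        have hwμ : w < (β.cof.ord) := lt_trans (lt_add_one w) hν
        obtain ⟨hwβ, hwmono⟩ := IH w (lt_add_one w) hwμ
        constructor
        · rw [hc, seqc_succ]
          refine max_lt (hgβ _ hν) (max_lt (hβ.succ_lt hwβ) (hβ.succ_lt (hj _ hwβ)))
        · intro x hx
          have hxw : x ≤ w := Order.lt_succ_iff.1 hx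
          have h1 : c x ≤ c w := by
            rcases lt_or_eq_of_le hxw with h | h
            · exact (hwmono x h).le
            · rw [h]
          have h2 : c w < c (w + 1) := by
            rw [hc, seqc_succ]
            exact lt_of_lt_of_le (lt_add_one _)
              (le_max_of_le_right (le_max_left _ _))
          exact lt_of_le_of_lt h1 h2
      · have hmono : ∀ x < ν, c x < c ν := by
          intro x hx
          have hx1 : x + 1 < ν := hlim.succ_lt hx
          have h1 : c x < c (x + 1) := (IH (x+1) hx1 (hx1.trans hν)).2 x (lt_add_one x)
          have h2 : c (x+1) ≤ c ν := by
            rw [hc, seqc_limit g j hlim]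
            exact Ordinal.le_bsup (fun x _ => c x) (x+1) hx1
          exact lt_of_lt_of_le h1 h2
        refine ⟨?_, hmono⟩
        rw [hc, seqc_limit g j hlim]
        refine bsup_lt_of_cof hβ ?_ _ (fun x hx => (IH x hx (hx.trans hν)).1)
        exact Cardinal.lt_ord.1 hν
  have hmono_le : ∀ x ν, x ≤ ν → ν < (β.cof.ord) → c x ≤ c ν := by
    intro x ν hxν hν
    rcases lt_or_eq_of_le hxν with h | h
    · exact ((key ν hν).2 x h).le
    · rw [h]
  have hreflect : ∀ x ν, x < (β.cof.ord) → ν < (β.cof.ord) → c x < c ν → x < ν := by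
    intro x ν hx hν hlt
    by_contra h
    push_neg at h
    exact absurd (lt_of_le_of_lt (hmono_le ν x h hx) hlt) (lt_irrefl _)
  -- cofinality of the image
  have hcofin : ∀ x < β, ∃ ν < (β.cof.ord), x < c ν := by
    intro x hx
    have : x < Ordinal.blsub (β.cof.ord) f := by rw [hf.blsub_eq]; exact hx
    rcases Ordinal.lt_blsub_iff.1 this with ⟨i, hi, hxi⟩
    have hi1 : i + 1 < (β.cof.ord) := hμlim.succ_lt hi
    refine ⟨i + 1, hi1, ?_⟩
    have h1 : f i hi < f (i+1) hi1 := hf.strict_mono hi hi1 (lt_add_one i)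
    have h2 : g (i+1) ≤ c (i+1) := by
      rw [hc, seqc_succ]
      exact le_max_left _ _
    have h3 : g (i+1) = f (i+1) hi1 := dif_pos hi1
    calc x ≤ f i hi := hxi
    _ < f (i+1) hi1 := h1
    _ = g (i+1) := h3.symm
    _ ≤ c (i+1) := h2
  refine ⟨c '' Set.Iio (β.cof.ord), ⟨?_, ?_, ?_⟩, ?_, ?_⟩
  · rintro y ⟨ν, hν, rfl⟩
    exact (key ν hν).1
  · intro x hx
    rcases hcofin x hx with ⟨ν, hν, hxν⟩
    exact ⟨c ν, ⟨ν, hν, rfl⟩, hxν⟩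
  · -- closedness
    intro α hα hαlim happ
    set U : Set Ordinal := {ν | ν < (β.cof.ord) ∧ c ν < α} with hU
    have hUne : U.Nonempty := by
      rcases happ 0 hαlim.pos with ⟨γ, ⟨ν, hν, rfl⟩, _, hγα⟩
      exact ⟨ν, hν, hγα⟩
    obtain ⟨ν0, hν0μ, hαν0⟩ := hcofin α hα
    have hUbd : ∀ u ∈ U, u < ν0 := by
      intro u hu
      by_contra h
      push_neg at h
      exact absurd (lt_of_le_of_lt (hmono_le ν0 u h hu.1) hu.2) (asymm hαν0)
    have hUdc : ∀ x u, u ∈ U → x ≤ u → x ∈ U := by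
      intro x u hu hxu
      exact ⟨lt_of_le_of_lt hxu hu.1, lt_of_le_of_lt (hmono_le x u hxu hu.1) hu.2⟩
    have hnomax : ∀ m ∈ U, ∃ ν ∈ U, m < ν := by
      intro m hm
      rcases happ (c m) hm.2 with ⟨γ, ⟨ν, hν, rfl⟩, hmγ, hγα⟩
      exact ⟨ν, ⟨hν, hγα⟩, hreflect m ν hm.1 hν hmγ⟩
    set ν' : Ordinal := sSup U with hν'
    have hbdd : BddAbove U := ⟨ν0, fun u hu => (hUbd u hu).le⟩
    have hle : ∀ u ∈ U, u ≤ ν' := fun u hu => le_csSup hbdd hu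
    have hν'le : ν' ≤ ν0 := csSup_le hUne (fun u hu => (hUbd u hu).le)
    have hν'μ : ν' < (β.cof.ord) := lt_of_le_of_lt hν'le hν0μ
    have hν'notU : ν' ∉ U := by
      intro h
      rcases hnomax ν' h with ⟨ν, hν, hlt⟩
      exact absurd (hle ν hν) (not_le_of_gt hlt)
    have hUeq : U = Set.Iio ν' := by
      ext x
      constructor
      · intro hx
        rcases lt_or_eq_of_le (hle x hx) with h | h
        · exact h
        · exact absurd (h ▸ hx) hν'notU
      · intro hx
        by_contra hxU
        have hub : ∀ u ∈ U, u ≤ x := by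
          intro u hu
          by_contra h
          push_neg at h
          exact hxU (hUdc x u hu h.le)
        exact absurd (csSup_le hUne hub) (not_le_of_gt hx)
    have hν'lim : Order.IsSuccLimit ν' := by
      rcases Ordinal.zero_or_succ_or_isSuccLimit ν' with h0 | ⟨w, hw⟩ | hlim
      · exfalso
        rcases hUne with ⟨u, hu⟩
        have := hle u hu
        rw [h0] at this
        have : u = 0 := le_antisymm this zero_le
        rw [this, ← h0] at hu
        exact hν'notU hu
      · exfalso
        have hwU : w ∈ U := by
          rw [hUeq]
          rw [← hw]
          exact Order.lt_succ w
        rcases hnomax w hwU with ⟨ν, hν, hwu⟩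
        rw [hUeq] at hν
        rw [← hw] at hν
        exact absurd (Order.succ_le_iff.1 (Order.succ_le_of_lt hwu)) (not_lt_of_ge (Order.lt_succ_iff.1 hν))
      · exact hlim
    have hcν' : c ν' = α := by
      rw [hc, seqc_limit g j hν'lim]
      apply le_antisymm
      · refine Ordinal.bsup_le ?_
        intro x hx
        have : x ∈ U := by rw [hUeq]; exact hx
        exact this.2.le
      · refine le_of_forall_lt (fun z hz => ?_)
        rcases happ z hz with ⟨γ, ⟨ν, hν, rfl⟩, hzγ, hγα⟩
        have hνU : ν ∈ U := ⟨hν, hγα⟩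
        have : ν < ν' := by rw [hUeq] at hνU; exact hνU
        exact lt_of_lt_of_le hzγ (Ordinal.le_bsup (fun x _ => c x) ν this)
    exact ⟨ν', hν'μ, hcν'⟩
  · -- cardinality
    calc #(c '' Set.Iio (β.cof.ord)) ≤ #(Set.Iio (β.cof.ord)) := Cardinal.mk_image_le
    _ = Cardinal.lift.{1} (β.cof.ord).card := Ordinal.mk_Iio_ordinal (β.cof.ord)
    _ = Cardinal.lift.{1} β.cof := by rw [Cardinal.card_ord]
  · -- jump property
    rintro a ⟨ν, hν, rfl⟩ a' ⟨ν', hν', rfl⟩ hlt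
    have hνν' : ν < ν' := hreflect ν ν' hν hν' hlt
    have h1 : ν + 1 ≤ ν' := Order.succ_le_of_lt hνν'
    have h2 : c (ν+1) ≤ c ν' := hmono_le (ν+1) ν' h1 hν'
    have h3 : j (c ν) < c (ν + 1) := by
      rw [hc, seqc_succ]
      exact lt_of_lt_of_le (lt_add_one _) (le_max_of_le_right (le_max_right _ _))
    exact lt_of_lt_of_le h3 h2

end club

section recmin
open Ordinal Set Cardinal

/-- Transfinite recursion picking at each step the least ordinal related by `P`
to the strict supremum of the previously chosen ordinals, below the bound `o`. -/
noncomputable def recMin (o : Ordinal.{0}) (P : Ordinal → Ordinal → Prop) : Ordinal → Ordinal :=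
  Ordinal.lt_wf.fix (fun ξ ih => sInf {β | β < o ∧ Ordinal.blsub ξ (fun x hx => ih x hx) ≤ β ∧
    P (Ordinal.blsub ξ (fun x hx => ih x hx)) β})

lemma recMin_eq (o : Ordinal.{0}) (P : Ordinal → Ordinal → Prop) (ξ : Ordinal) :
    recMin o P ξ = sInf {β | β < o ∧ Ordinal.blsub ξ (fun x _ => recMin o P x) ≤ β ∧
      P (Ordinal.blsub ξ (fun x _ => recMin o P x)) β} := by
  conv_lhs => rw [recMin, WellFounded.fix_eq]
  rfl

lemma recMin_spec {κ : Cardinal.{0}} (hreg : κ.IsRegular) (P : Ordinal → Ordinal → Prop)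
    (H : ∀ s < κ.ord, ∃ β, β < κ.ord ∧ s ≤ β ∧ P s β) :
    ∀ ξ < κ.ord, recMin κ.ord P ξ < κ.ord ∧ (∀ x < ξ, recMin κ.ord P x < recMin κ.ord P ξ) ∧
      Ordinal.blsub ξ (fun x _ => recMin κ.ord P x) ≤ recMin κ.ord P ξ ∧
      P (Ordinal.blsub ξ (fun x _ => recMin κ.ord P x)) (recMin κ.ord P ξ) := by
  have hκlim : Order.IsSuccLimit κ.ord := Cardinal.isSuccLimit_ord hreg.aleph0_le
  intro ξ
  induction ξ using Ordinal.induction with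
  | _ ξ IH =>
    intro hξ
    set s : Ordinal := Ordinal.blsub ξ (fun x _ => recMin κ.ord P x) with hs
    have hsκ : s < κ.ord := by
      refine blsub_lt_of_cof hκlim ?_ _ (fun x hx => (IH x hx (hx.trans hξ)).1)
      rw [hreg.cof_eq]
      exact Cardinal.lt_ord.1 hξ
    obtain ⟨β, hβκ, hsβ, hPβ⟩ := H s hsκ
    have hne : {β | β < κ.ord ∧ s ≤ β ∧ P s β}.Nonempty := ⟨β, hβκ, hsβ, hPβ⟩
    have hmem := csInf_mem hne
    rw [← recMin_eq κ.ord P ξ] at hmem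
    obtain ⟨h1, h2, h3⟩ := hmem
    refine ⟨h1, ?_, h2, h3⟩
    intro x hx
    exact lt_of_lt_of_le (Ordinal.lt_blsub (fun x _ => recMin κ.ord P x) x hx) h2

end recmin

/-- If every C-sequence on the regular uncountable cardinal `κ` is trivial
stationarily often, then `κ →^poly (κ)²_{reg-bdd}` holds: every normal
regressively bounded coloring admits a rainbow subset of cardinality `κ`. -/
theorem stat_trivial_Csequence_implies_poly_regbdd (κ : Cardinal.{0})
    (hreg : κ.IsRegular) (hunc : ℵ₀ < κ)
    (htriv : ∀ C : Ordinal → Set Ordinal,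
      (∀ α < κ.ord, Order.IsSuccLimit α → IsClubIn (C α) α) →
      ∃ D : Set Ordinal, IsClubIn D κ.ord ∧
        ∀ α < κ.ord,
          IsStatIn {β : Ordinal | β < κ.ord ∧ Order.IsSuccLimit β ∧ D ∩ Set.Iio α ⊆ C β} κ.ord)
    (f : Ordinal → Ordinal → Ordinal) (hnorm : IsNormal2 f κ.ord)
    (hbdd : RegBdd f κ) :
    ∃ A : Set Ordinal, A ⊆ Set.Iio κ.ord ∧ #A = Cardinal.lift.{1} κ ∧
      RainbowOn f A := by
  classical
  obtain ⟨lam, hlamκ, _hstat, hbound⟩ := hbdd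
  have hκlim : Order.IsSuccLimit κ.ord := Cardinal.isSuccLimit_ord hreg.aleph0_le
  have hκcof : κ.ord.cof = κ := hreg.cof_eq
  have hκcof_unc : ℵ₀ < κ.ord.cof := by rw [hκcof]; exact hunc
  -- choose the bounding function for color classes
  choose F hF1 hF2 using hbound
  -- the jump functions
  set j : Ordinal → Ordinal → Ordinal := fun v x =>
    if h : v < κ.ord ∧ lam ≤ v.cof then F v h.1 h.2 (f x v) else 0 with hj
  have hjlt : ∀ v, Order.IsSuccLimit v → ∀ x < v, j v x < v := by
    intro v hv x _
    by_cases h : v < κ.ord ∧ lam ≤ v.cof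
    · simp only [hj, dif_pos h]
      exact hF1 v h.1 h.2 _
    · simp only [hj, dif_neg h]
      exact hv.pos
  -- the C-sequence
  have club_ex : ∀ v : Ordinal, Order.IsSuccLimit v →
      ∃ Cb : Set Ordinal, IsClubIn Cb v ∧ #Cb ≤ Cardinal.lift.{1} v.cof ∧
        ∀ a ∈ Cb, ∀ a' ∈ Cb, a < a' → j v a < a' :=
    fun v hv => exists_club_jump v hv (j v) (hjlt v hv)
  choose! Cb hCb1 hCb2 hCb3 using club_ex
  obtain ⟨D, hDclub, hDstat⟩ := htriv Cb (fun α _ hα => hCb1 α hα)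
  obtain ⟨hDsub, hDunb, _hDcl⟩ := hDclub
  -- a bounded subset of `D` of size `lam`
  set P1 : Ordinal → Ordinal → Prop := fun _ β => β ∈ D with hP1
  have H1 : ∀ s < κ.ord, ∃ β, β < κ.ord ∧ s ≤ β ∧ P1 s β := by
    intro s hs
    rcases hDunb s hs with ⟨β, hβD, hsβ⟩
    exact ⟨β, hDsub hβD, hsβ.le, hβD⟩
  have spec1 := recMin_spec hreg P1 H1
  set e : Ordinal → Ordinal := recMin κ.ord P1 with he
  have hlamord : lam.ord < κ.ord := Cardinal.ord_lt_ord.2 hlamκ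
  set δ0 : Ordinal := Ordinal.blsub lam.ord (fun x _ => e x) with hδ0def
  have hδ0 : δ0 < κ.ord := by
    refine blsub_lt_of_cof hκlim ?_ _ (fun x hx => (spec1 x (hx.trans hlamord)).1)
    rw [hκcof, Cardinal.card_ord]
    exact hlamκ
  have hδ0card : Cardinal.lift.{1} lam ≤ #(D ∩ Set.Iio δ0 : Set Ordinal) := by
    have hmap : ∀ x : Set.Iio lam.ord, e x.1 ∈ D ∩ Set.Iio δ0 := by
      rintro ⟨x, hx⟩
      exact ⟨(spec1 x (hx.trans hlamord)).2.2.2,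
        Ordinal.lt_blsub (fun x _ => e x) x hx⟩
    have hinj : Function.Injective (fun x : Set.Iio lam.ord =>
        (⟨e x.1, hmap x⟩ : (D ∩ Set.Iio δ0 : Set Ordinal))) := by
      rintro ⟨x, hx⟩ ⟨y, hy⟩ hxy
      simp only [Subtype.mk.injEq] at hxy ⊢
      by_contra hne
      rcases lt_or_gt_of_ne hne with h | h
      · exact absurd hxy (ne_of_lt ((spec1 y (hy.trans hlamord)).2.1 x h))
      · exact absurd hxy.symm (ne_of_lt ((spec1 x (hx.trans hlamord)).2.1 y h))
    calc Cardinal.lift.{1} lam = Cardinal.lift.{1} lam.ord.card := by rw [Cardinal.card_ord]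
    _ = #(Set.Iio lam.ord) := (Ordinal.mk_Iio_ordinal lam.ord).symm
    _ ≤ #(D ∩ Set.Iio δ0 : Set Ordinal) := Cardinal.mk_le_of_injective hinj
  -- the main recursion
  set P2 : Ordinal → Ordinal → Prop := fun s β =>
    β ∈ D ∧ Order.IsSuccLimit β ∧ D ∩ Set.Iio (max s (δ0 + 1)) ⊆ Cb β with hP2
  have H2 : ∀ s < κ.ord, ∃ β, β < κ.ord ∧ s ≤ β ∧ P2 s β := by
    intro s hs
    have hακ : max s (δ0 + 1) < κ.ord := max_lt hs (hκlim.succ_lt hδ0)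
    have hclub2 : IsClubIn (D ∩ (Set.Ioi (max s (δ0 + 1)) ∩ Set.Iio κ.ord)) κ.ord :=
      isClubIn_inter hκlim hκcof_unc ⟨hDsub, hDunb, _hDcl⟩ (isClubIn_Ioi hκlim _ hακ)
    rcases hDstat _ hακ _ hclub2 with ⟨β, ⟨hβκ, hβlim, hβsub⟩, hβD, hβα, _⟩
    exact ⟨β, hβκ, (le_max_left _ _).trans hβα.le, hβD, hβlim, hβsub⟩
  have spec2 := recMin_spec hreg P2 H2
  set a : Ordinal → Ordinal := recMin κ.ord P2 with ha
  have haκ : ∀ ξ < κ.ord, a ξ < κ.ord := fun ξ hξ => (spec2 ξ hξ).1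
  have hamono : ∀ x ξ, x < ξ → ξ < κ.ord → a x < a ξ := fun x ξ hx hξ => (spec2 ξ hξ).2.1 x hx
  have hareflect : ∀ x ξ, x < κ.ord → ξ < κ.ord → a x < a ξ → x < ξ := by
    intro x ξ hx hξ hlt
    by_contra h
    push_neg at h
    rcases lt_or_eq_of_le h with h' | h'
    · exact absurd (hamono ξ x h' hx) (asymm hlt)
    · rw [h'] at hlt; exact absurd hlt (lt_irrefl _)
  have haD : ∀ ξ < κ.ord, a ξ ∈ D := fun ξ hξ => (spec2 ξ hξ).2.2.2.1
  have halim : ∀ ξ < κ.ord, Order.IsSuccLimit (a ξ) := fun ξ hξ => (spec2 ξ hξ).2.2.2.2.1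
  -- earlier elements belong to the club attached to later ones
  have hmem : ∀ η ξ, η < ξ → ξ < κ.ord → a η ∈ Cb (a ξ) := by
    intro η ξ hηξ hξ
    refine (spec2 ξ hξ).2.2.2.2.2 ⟨haD η (hηξ.trans hξ), ?_⟩
    have h1 : a η < Ordinal.blsub ξ (fun x _ => a x) :=
      Ordinal.lt_blsub (fun x _ => a x) η hηξ
    exact lt_of_lt_of_le h1 (le_max_left _ _)
  -- the clubs attached to chosen points are big, so the cofinality is at least lam
  have hcofa : ∀ ξ < κ.ord, lam ≤ (a ξ).cof := by
    intro ξ hξ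
    by_contra h
    push_neg at h
    have hCbig : Cardinal.lift.{1} lam ≤ #(Cb (a ξ)) := by
      refine hδ0card.trans (Cardinal.mk_le_mk_of_subset ?_)
      refine Set.Subset.trans ?_ (spec2 ξ hξ).2.2.2.2.2
      intro x hx
      refine ⟨hx.1, lt_of_lt_of_le (hx.2.trans (lt_add_one δ0)) (le_max_right _ _)⟩
    have hCsmall : #(Cb (a ξ)) ≤ Cardinal.lift.{1} (a ξ).cof := hCb2 _ (halim ξ hξ)
    have := hCbig.trans hCsmall
    rw [Cardinal.lift_le] at this
    exact absurd this (not_le_of_gt h)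
  -- the rainbow set
  refine ⟨a '' Set.Iio κ.ord, ?_, ?_, ?_⟩
  · rintro y ⟨ξ, hξ, rfl⟩
    exact haκ ξ hξ
  · have hinj : Set.InjOn a (Set.Iio κ.ord) := by
      intro x hx y hy hxy
      by_contra hne
      rcases lt_or_gt_of_ne hne with h | h
      · exact absurd hxy (ne_of_lt (hamono x y h hy))
      · exact absurd hxy.symm (ne_of_lt (hamono y x h hx))
    rw [Cardinal.mk_image_eq_of_injOn a _ hinj, Ordinal.mk_Iio_ordinal, Cardinal.card_ord]
  · -- rainbow property
    have main : ∀ ηu ηu' ηv, ηu < ηv → ηu' < ηv → ηv < κ.ord → a ηu < a ηu' →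
        f (a ηu) (a ηv) = f (a ηu') (a ηv) → False := by
      intro ηu ηu' ηv h1 h2 h3 hlt heq
      have hvκ : a ηv < κ.ord := haκ ηv h3
      have hvlim : Order.IsSuccLimit (a ηv) := halim ηv h3
      have hvcof : lam ≤ (a ηv).cof := hcofa ηv h3
      have hu : a ηu ∈ Cb (a ηv) := hmem ηu ηv h1 h3
      have hu' : a ηu' ∈ Cb (a ηv) := hmem ηu' ηv h2 h3
      have hjump : j (a ηv) (a ηu) < a ηu' := hCb3 _ hvlim _ hu _ hu' hlt
      have hcond : a ηv < κ.ord ∧ lam ≤ (a ηv).cof := ⟨hvκ, hvcof⟩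
      rw [hj] at hjump
      simp only [dif_pos hcond] at hjump
      have hu'v : a ηu' < a ηv := hamono ηu' ηv h2 h3
      have hclass : a ηu' < F (a ηv) hcond.1 hcond.2 (f (a ηu) (a ηv)) :=
        hF2 (a ηv) hcond.1 hcond.2 (f (a ηu) (a ηv)) (a ηu') hu'v heq.symm
      exact absurd hclass (asymm hjump)
    rintro u ⟨ξu, hξu, rfl⟩ v ⟨ξv, hξv, rfl⟩ u' ⟨ξu', hξu', rfl⟩ v' ⟨ξv', hξv', rfl⟩ huv hu'v' heq
    have hvv' : a ξv = a ξv' := hnorm _ _ _ _ huv (haκ ξv hξv) hu'v' (haκ ξv' hξv') heq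
    have hη1 : ξu < ξv := hareflect ξu ξv hξu hξv huv
    have hη2 : ξu' < ξv := by
      refine hareflect ξu' ξv hξu' hξv ?_
      rw [hvv']
      exact hu'v'
    have heq2 : f (a ξu) (a ξv) = f (a ξu') (a ξv) := by rw [heq, hvv']
    refine ⟨?_, hvv'.symm ▸ rfl⟩
    by_contra hne
    rcases lt_or_gt_of_ne hne with h | h
    · exact main ξu ξu' ξv hη1 hη2 hξv h heq2
    · exact main ξu' ξu ξv hη2 hη1 hξv h heq2.symm
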